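/- Let (X,S,T) be a minimal system with commuting transformations S and T such that S is transitive (has a dense orbit as a single transformation). Then R_{T,T}(X) ⊆ R_{S,T}(X) ⊆ R_{S,S}(X). -/

import Mathlib

/-- The `n`-th integer iterate of a homeomorphism, as a function. -/
def hpow {X : Type*} [TopologicalSpace X] (S : X ≃ₜ X) (n : ℤ) : X → X :=
  ⇑(S.toEquiv ^ n)

variable {X : Type*} [TopologicalSpace X]

def cube (S T : X ≃ₜ X) : Set (X × X × X × X) :=
  closure {p | ∃ (x : X) (n m : ℤ),
    p = (x, hpow S n x, hpow T m x, hpow S n (hpow T m x))}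

def cube2 (S : X ≃ₜ X) : Set (X × X) :=
  closure {p | ∃ (x : X) (n : ℤ), p = (x, hpow S n x)}

def relS (S T : X ≃ₜ X) : Set (X × X) :=
  {p | ∃ a : X, (p.1, p.2, a, a) ∈ cube S T}

def relT (S T : X ≃ₜ X) : Set (X × X) :=
  {p | ∃ b : X, (p.1, b, p.2, b) ∈ cube S T}

def minimalST (S T : X ≃ₜ X) : Prop :=
  ∀ x : X, Dense {y : X | ∃ n m : ℤ, y = hpow S n (hpow T m x)}

def minimal1 (S : X ≃ₜ X) : Prop :=
  ∀ x : X, Dense {y : X | ∃ n : ℤ, y = hpow S n x}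

def distalST {Y : Type*} [MetricSpace Y] (S T : Y ≃ₜ Y) : Prop :=
  ∀ x y : Y, x ≠ y → ∃ ε > 0, ∀ n m : ℤ,
    ε ≤ dist (hpow S n (hpow T m x)) (hpow S n (hpow T m y))

def proxT {Y : Type*} [MetricSpace Y] (T : Y ≃ₜ Y) : Set (Y × Y) :=
  {p | ∀ ε > 0, ∃ m : ℤ, dist (hpow T m p.1) (hpow T m p.2) < ε}

/- ## Auxiliary lemmas -/

lemma hpow_add (S : X ≃ₜ X) (n m : ℤ) (x : X) :
    hpow S n (hpow S m x) = hpow S (n + m) x := by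
  simp only [hpow, zpow_add, Equiv.Perm.mul_apply]

lemma hpow_comm (S T : X ≃ₜ X) (hST : ∀ x, S (T x) = T (S x)) (n m : ℤ) (x : X) :
    hpow S n (hpow T m x) = hpow T m (hpow S n x) := by
  have h : Commute S.toEquiv T.toEquiv := Equiv.ext fun y => hST y
  have h2 := h.zpow_zpow n m
  calc hpow S n (hpow T m x) = (S.toEquiv ^ n * T.toEquiv ^ m) x := rfl
    _ = (T.toEquiv ^ m * S.toEquiv ^ n) x := by rw [h2]
    _ = hpow T m (hpow S n x) := rfl

lemma hpow_swap (S : X ≃ₜ X) (n m : ℤ) (x : X) :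
    hpow S n (hpow S m x) = hpow S m (hpow S n x) := by
  rw [hpow_add, hpow_add, add_comm]

lemma continuous_hpow (S : X ≃ₜ X) (n : ℤ) : Continuous (hpow S n) := by
  induction n using Int.induction_on with
  | zero => simpa [hpow] using continuous_id
  | succ k ih =>
      have : hpow S ((k : ℤ) + 1) = S ∘ hpow S k := by
        funext x
        rw [show (k:ℤ)+1 = 1+k by ring, ← hpow_add S 1 k x]
        simp [hpow, zpow_one]
      rw [this]; exact S.continuous.comp ih
  | pred k ih =>
      have : hpow S (-(k : ℤ) - 1) = S.symm ∘ hpow S (-k) := by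
        funext x
        rw [show -(k:ℤ) - 1 = -1 + -k by ring, ← hpow_add S (-1) (-k) x]
        simp [hpow, zpow_neg_one]
      rw [this]; exact S.symm.continuous.comp ih

/-- The generating set of a cube. -/
def cubeGen (S T : X ≃ₜ X) : Set (X × X × X × X) :=
  {p | ∃ (x : X) (n m : ℤ),
    p = (x, hpow S n x, hpow T m x, hpow S n (hpow T m x))}

lemma cube_eq (S T : X ≃ₜ X) : cube S T = closure (cubeGen S T) := rfl

lemma isClosed_cube (S T : X ≃ₜ X) : IsClosed (cube S T) := isClosed_closure

lemma gen_mem_cube (S T : X ≃ₜ X) (x : X) (n m : ℤ) :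
    (x, hpow S n x, hpow T m x, hpow S n (hpow T m x)) ∈ cube S T :=
  subset_closure ⟨x, n, m, rfl⟩

/-- Diagonal invariance of a cube under any map commuting with both generators. -/
lemma cube_diag {S T : X ≃ₜ X} {g : X → X} (hg : Continuous g)
    (hgS : ∀ n x, g (hpow S n x) = hpow S n (g x))
    (hgT : ∀ m x, g (hpow T m x) = hpow T m (g x)) :
    Set.MapsTo (fun p : X × X × X × X => (g p.1, g p.2.1, g p.2.2.1, g p.2.2.2))
      (cube S T) (cube S T) := by
  have h1 : Set.MapsTo (fun p : X × X × X × X => (g p.1, g p.2.1, g p.2.2.1, g p.2.2.2))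
      (cubeGen S T) (cube S T) := by
    rintro p ⟨x, n, m, rfl⟩
    refine subset_closure ⟨g x, n, m, ?_⟩
    simp only [hgS, hgT]
  have := h1.closure (by fun_prop)
  rwa [(isClosed_cube S T).closure_eq] at this

section trans

variable {S T : X ≃ₜ X} (hST : ∀ x, S (T x) = T (S x)) {x₀ : X}
  (hx₀ : Dense {y : X | ∃ n : ℤ, y = hpow S n x₀})

include hx₀ in
/-- Generators of `cube S T` based at an `S`-transitive point lie in `cube S S`. -/
lemma gen_ST_mem_SS (n m : ℤ) :
    (x₀, hpow S n x₀, hpow T m x₀, hpow S n (hpow T m x₀)) ∈ cube S S := by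
  have hΨ : Set.MapsTo (fun y : X => (x₀, hpow S n x₀, y, hpow S n y))
      {y : X | ∃ k : ℤ, y = hpow S k x₀} (cube S S) := by
    rintro y ⟨k, rfl⟩
    exact gen_mem_cube S S x₀ n k
  have hc : Continuous (fun y : X => (x₀, hpow S n x₀, y, hpow S n y)) :=
    continuous_const.prodMk (continuous_const.prodMk
      (continuous_id.prodMk (continuous_hpow S n)))
  have := hΨ.closure hc
  rw [(isClosed_cube S S).closure_eq, hx₀.closure_eq] at this
  exact this (Set.mem_univ (hpow T m x₀))

include hST hx₀ in
/-- Generators of `cube T T` based at an `S`-transitive point lie in `cube S T`. -/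
lemma gen_TT_mem_ST (n m : ℤ) :
    (x₀, hpow T n x₀, hpow T m x₀, hpow T n (hpow T m x₀)) ∈ cube S T := by
  have hΨ : Set.MapsTo (fun y : X => (x₀, y, hpow T m x₀, hpow T m y))
      {y : X | ∃ k : ℤ, y = hpow S k x₀} (cube S T) := by
    rintro y ⟨k, rfl⟩
    have := gen_mem_cube S T x₀ k m
    rwa [hpow_comm S T hST k m x₀] at this
  have hc : Continuous (fun y : X => (x₀, y, hpow T m x₀, hpow T m y)) :=
    continuous_const.prodMk (continuous_id.prodMk
      (continuous_const.prodMk (continuous_hpow T m)))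
  have := hΨ.closure hc
  rw [(isClosed_cube S T).closure_eq, hx₀.closure_eq] at this
  have h2 := this (Set.mem_univ (hpow T n x₀))
  simpa [hpow_swap T m n x₀] using h2

end trans

/-- Under minimality of the `⟨S,T⟩`-action and transitivity of `S`,
`cube S T ⊆ cube S S`. -/
lemma cube_ST_subset_SS {S T : X ≃ₜ X} (hST : ∀ x, S (T x) = T (S x))
    (hmin : minimalST S T) {x₀ : X}
    (hx₀ : Dense {y : X | ∃ n : ℤ, y = hpow S n x₀}) :
    cube S T ⊆ cube S S := by
  rw [cube_eq S T]
  refine closure_minimal ?_ (isClosed_cube S S)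
  rintro p ⟨x, n, m, rfl⟩
  -- map z ↦ generator of `cube S T` pattern, landing in `cube S S`
  have hΦ : Set.MapsTo (fun z : X => (z, hpow S n z, hpow T m z, hpow S n (hpow T m z)))
      {y : X | ∃ a b : ℤ, y = hpow S a (hpow T b x₀)} (cube S S) := by
    rintro y ⟨a, b, rfl⟩
    have hgS : ∀ (k : ℤ) (x : X),
        hpow S a (hpow T b (hpow S k x)) = hpow S k (hpow S a (hpow T b x)) := by
      intro k x
      rw [hpow_comm T S (fun x => (hST x).symm) b k x, hpow_swap S a k]
    have hgT : ∀ (k : ℤ) (x : X),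
        hpow S a (hpow T b (hpow T k x)) = hpow T k (hpow S a (hpow T b x)) := by
      intro k x
      rw [hpow_swap T b k x, hpow_comm S T hST a k (hpow T b x)]
    have hgc : Continuous (fun z : X => hpow S a (hpow T b z)) :=
      (continuous_hpow S a).comp (continuous_hpow T b)
    have hd := cube_diag (S := S) (T := S) hgc hgS hgS
    have hmem := gen_ST_mem_SS (S := S) (T := T) hx₀ n m
    have h4 := hd hmem
    simp only at h4
    rw [hgS n x₀, hgT m x₀, hgS n (hpow T m x₀), hgT m x₀] at h4
    exact h4
  have hc : Continuous (fun z : X => (z, hpow S n z, hpow T m z, hpow S n (hpow T m z))) :=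
    continuous_id.prodMk ((continuous_hpow S n).prodMk
      ((continuous_hpow T m).prodMk ((continuous_hpow S n).comp (continuous_hpow T m))))
  have := hΦ.closure hc
  rw [(isClosed_cube S S).closure_eq, (hmin x₀).closure_eq] at this
  exact this (Set.mem_univ x)

/-- Under the same hypotheses, `cube T T ⊆ cube S T`. -/
lemma cube_TT_subset_ST {S T : X ≃ₜ X} (hST : ∀ x, S (T x) = T (S x))
    (hmin : minimalST S T) {x₀ : X}
    (hx₀ : Dense {y : X | ∃ n : ℤ, y = hpow S n x₀}) :
    cube T T ⊆ cube S T := by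
  rw [cube_eq T T]
  refine closure_minimal ?_ (isClosed_cube S T)
  rintro p ⟨x, n, m, rfl⟩
  have hΦ : Set.MapsTo (fun z : X => (z, hpow T n z, hpow T m z, hpow T n (hpow T m z)))
      {y : X | ∃ a b : ℤ, y = hpow S a (hpow T b x₀)} (cube S T) := by
    rintro y ⟨a, b, rfl⟩
    have hgS : ∀ (k : ℤ) (x : X),
        hpow S a (hpow T b (hpow S k x)) = hpow S k (hpow S a (hpow T b x)) := by
      intro k x
      rw [hpow_comm T S (fun x => (hST x).symm) b k x, hpow_swap S a k]
    have hgT : ∀ (k : ℤ) (x : X),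
        hpow S a (hpow T b (hpow T k x)) = hpow T k (hpow S a (hpow T b x)) := by
      intro k x
      rw [hpow_swap T b k x, hpow_comm S T hST a k (hpow T b x)]
    have hgc : Continuous (fun z : X => hpow S a (hpow T b z)) :=
      (continuous_hpow S a).comp (continuous_hpow T b)
    have hd := cube_diag (S := S) (T := T) hgc hgS hgT
    have hmem := gen_TT_mem_ST (S := S) (T := T) hST hx₀ n m
    have h4 := hd hmem
    simp only at h4
    rw [hgT n x₀, hgT m x₀, hgT n (hpow T m x₀), hgT m x₀] at h4
    exact h4
  have hc : Continuous (fun z : X => (z, hpow T n z, hpow T m z, hpow T n (hpow T m z))) :=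
    continuous_id.prodMk ((continuous_hpow T n).prodMk
      ((continuous_hpow T m).prodMk ((continuous_hpow T n).comp (continuous_hpow T m))))
  have := hΦ.closure hc
  rw [(isClosed_cube S T).closure_eq, (hmin x₀).closure_eq] at this
  exact this (Set.mem_univ x)

theorem stmt16 {X : Type*} [MetricSpace X] [CompactSpace X] (S T : X ≃ₜ X)
    (hST : ∀ x, S (T x) = T (S x)) (hmin : minimalST S T)
    (htrans : ∃ x : X, Dense {y : X | ∃ n : ℤ, y = hpow S n x}) :
    relS T T ∩ relT T T ⊆ relS S T ∩ relT S T ∧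
      relS S T ∩ relT S T ⊆ relS S S ∩ relT S S := by
  obtain ⟨x₀, hx₀⟩ := htrans
  have h1 : cube T T ⊆ cube S T := cube_TT_subset_ST hST hmin hx₀
  have h2 : cube S T ⊆ cube S S := cube_ST_subset_SS hST hmin hx₀
  constructor
  · rintro p ⟨⟨a, ha⟩, ⟨b, hb⟩⟩
    exact ⟨⟨a, h1 ha⟩, ⟨b, h1 hb⟩⟩
  · rintro p ⟨⟨a, ha⟩, ⟨b, hb⟩⟩
    exact ⟨⟨a, h2 ha⟩, ⟨b, h2 hb⟩⟩
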